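/- Let p₁, p₂, p₃ ∈ ℝ² be affinely independent points and e₁, e₂, e₃ ∈ ℝ² with e_i ≠ p_i. Suppose there exist nonzero reals w₁₂, w₂₃, w₃₁ and nonzero reals u₁, u₂, u₃ such that equilibrium holds at each vertex: u₁(p₁ - e₁) + w₁₂(p₁ - p₂) + w₃₁(p₁ - p₃) = 0, u₂(p₂ - e₂) + w₁₂(p₂ - p₁) + w₂₃(p₂ - p₃) = 0, u₃(p₃ - e₃) + w₂₃(p₃ - p₂) + w₃₁(p₃ - p₁) = 0. Then the three lines through p_i and e_i (i = 1,2,3) are concurrent. -/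

import Mathlib

/-- A framed triangle in the plane admitting an everywhere non-zero self-stress
has concurrent external force lines (assuming they are pairwise non-parallel). -/
theorem stmt_5 (p₁ p₂ p₃ e₁ e₂ e₃ : Fin 2 → ℝ)
    (hind : AffineIndependent ℝ ![p₁, p₂, p₃])
    (he₁ : e₁ ≠ p₁) (he₂ : e₂ ≠ p₂) (he₃ : e₃ ≠ p₃)
    (hpar₁₂ : ¬ ∃ k : ℝ, e₂ - p₂ = k • (e₁ - p₁))
    (hpar₂₃ : ¬ ∃ k : ℝ, e₃ - p₃ = k • (e₂ - p₂))
    (hpar₃₁ : ¬ ∃ k : ℝ, e₁ - p₁ = k • (e₃ - p₃))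
    (w₁₂ w₂₃ w₃₁ u₁ u₂ u₃ : ℝ)
    (hw₁₂ : w₁₂ ≠ 0) (hw₂₃ : w₂₃ ≠ 0) (hw₃₁ : w₃₁ ≠ 0)
    (hu₁ : u₁ ≠ 0) (hu₂ : u₂ ≠ 0) (hu₃ : u₃ ≠ 0)
    (heq₁ : u₁ • (p₁ - e₁) + w₁₂ • (p₁ - p₂) + w₃₁ • (p₁ - p₃) = 0)
    (heq₂ : u₂ • (p₂ - e₂) + w₁₂ • (p₂ - p₁) + w₂₃ • (p₂ - p₃) = 0)
    (heq₃ : u₃ • (p₃ - e₃) + w₂₃ • (p₃ - p₂) + w₃₁ • (p₃ - p₁) = 0) :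
    ∃ c : Fin 2 → ℝ,
      (∃ s : ℝ, c = p₁ + s • (e₁ - p₁)) ∧
      (∃ s : ℝ, c = p₂ + s • (e₂ - p₂)) ∧
      (∃ s : ℝ, c = p₃ + s • (e₃ - p₃)) := by
  have h1 : ∀ i, u₁ * (p₁ i - e₁ i) + w₁₂ * (p₁ i - p₂ i) + w₃₁ * (p₁ i - p₃ i) = 0 := by
    intro i
    have := congrFun heq₁ i
    simpa using this
  have h2 : ∀ i, u₂ * (p₂ i - e₂ i) + w₁₂ * (p₂ i - p₁ i) + w₂₃ * (p₂ i - p₃ i) = 0 := by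
    intro i
    have := congrFun heq₂ i
    simpa using this
  have h3 : ∀ i, u₃ * (p₃ i - e₃ i) + w₂₃ * (p₃ i - p₂ i) + w₃₁ * (p₃ i - p₁ i) = 0 := by
    intro i
    have := congrFun heq₃ i
    simpa using this
  have hD : w₁₂ * w₂₃ + w₂₃ * w₃₁ + w₃₁ * w₁₂ ≠ 0 := by
    intro hD0
    have hsum : w₁₂ + w₃₁ ≠ 0 := by
      intro h
      have : w₂₃ * (w₁₂ + w₃₁) + w₃₁ * w₁₂ = 0 := by rw [← hD0]; ring
      rw [h] at this
      simp at this
      rcases this with h' | h' <;> [exact hw₃₁ h'; exact hw₁₂ h']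
    apply hpar₁₂
    refine ⟨-(w₁₂ * u₁) / ((w₁₂ + w₃₁) * u₂), ?_⟩
    funext i
    simp only [Pi.sub_apply, Pi.smul_apply, smul_eq_mul]
    field_simp
    linear_combination (-(w₁₂ + w₃₁)) * h2 i - w₁₂ * h1 i + (p₂ i - p₃ i) * hD0
  refine ⟨p₁ + (-(w₂₃ * u₁) / (w₁₂ * w₂₃ + w₂₃ * w₃₁ + w₃₁ * w₁₂)) • (e₁ - p₁), ⟨_, rfl⟩,
    ⟨-(w₃₁ * u₂) / (w₁₂ * w₂₃ + w₂₃ * w₃₁ + w₃₁ * w₁₂), ?_⟩,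
    ⟨-(w₁₂ * u₃) / (w₁₂ * w₂₃ + w₂₃ * w₃₁ + w₃₁ * w₁₂), ?_⟩⟩
  · funext i
    simp only [Pi.add_apply, Pi.sub_apply, Pi.smul_apply, smul_eq_mul]
    rw [div_mul_eq_mul_div, div_mul_eq_mul_div, add_div' _ _ _ hD, add_div' _ _ _ hD, div_left_inj' hD]
    linear_combination w₂₃ * h1 i - w₃₁ * h2 i
  · funext i
    simp only [Pi.add_apply, Pi.sub_apply, Pi.smul_apply, smul_eq_mul]
    rw [div_mul_eq_mul_div, div_mul_eq_mul_div, add_div' _ _ _ hD, add_div' _ _ _ hD, div_left_inj' hD]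
    linear_combination w₂₃ * h1 i - w₁₂ * h3 i
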